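/- Let M be a subset of the feature variables such that C is conditionally independent of all remaining features given M (Markov blanket property). Then for every subset S of features disjoint from M (i.e., S ⊆ F \ M), I(C; M) > I(C; S) unless I(C; M | S) = 0, and in all cases I(C; M) ≥ I(C; S). -/

import Mathlib

open Finset

namespace PaperFS

variable {Ω : Type} [Fintype Ω]

/-- The (marginal) probability mass of `X = x` under the weight function `p`. -/
noncomputable def pmfOf {α : Type} [DecidableEq α] (p : Ω → ℝ) (X : Ω → α) (x : α) : ℝ :=
  ∑ ω ∈ Finset.univ.filter (fun ω => X ω = x), p ω

/-- `p` is a probability mass function on the finite sample space `Ω`. -/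
def IsPMF (p : Ω → ℝ) : Prop := (∀ ω, 0 ≤ p ω) ∧ ∑ ω, p ω = 1

/-- Mutual information `I(X;Y)` of discrete random variables. -/
noncomputable def MI {α β : Type} [Fintype α] [Fintype β] [DecidableEq α] [DecidableEq β]
    (p : Ω → ℝ) (X : Ω → α) (Y : Ω → β) : ℝ :=
  ∑ x : α, ∑ y : β,
    pmfOf p (fun ω => (X ω, Y ω)) (x, y) *
      Real.log (pmfOf p (fun ω => (X ω, Y ω)) (x, y) / (pmfOf p X x * pmfOf p Y y))

/-- Conditional mutual information `I(X;Y|Z)` of discrete random variables. -/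
noncomputable def CMI {α β γ : Type} [Fintype α] [Fintype β] [Fintype γ]
    [DecidableEq α] [DecidableEq β] [DecidableEq γ]
    (p : Ω → ℝ) (X : Ω → α) (Y : Ω → β) (Z : Ω → γ) : ℝ :=
  ∑ z : γ, ∑ x : α, ∑ y : β,
    pmfOf p (fun ω => (X ω, Y ω, Z ω)) (x, y, z) *
      Real.log ((pmfOf p Z z * pmfOf p (fun ω => (X ω, Y ω, Z ω)) (x, y, z)) /
        (pmfOf p (fun ω => (X ω, Z ω)) (x, z) * pmfOf p (fun ω => (Y ω, Z ω)) (y, z)))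

/-- Shannon entropy `H(X)`. -/
noncomputable def Ent {α : Type} [Fintype α] [DecidableEq α] (p : Ω → ℝ) (X : Ω → α) : ℝ :=
  -∑ x : α, pmfOf p X x * Real.log (pmfOf p X x)

/-- Conditional entropy `H(X|Y) = H(X) - I(X;Y)`. -/
noncomputable def CEnt {α β : Type} [Fintype α] [Fintype β] [DecidableEq α] [DecidableEq β]
    (p : Ω → ℝ) (X : Ω → α) (Y : Ω → β) : ℝ :=
  Ent p X - MI p X Y

/-- `X` and `Y` are (marginally) independent: `P(x,y) = P(x)P(y)`. -/
def Indep {α β : Type} [DecidableEq α] [DecidableEq β]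
    (p : Ω → ℝ) (X : Ω → α) (Y : Ω → β) : Prop :=
  ∀ x y, pmfOf p (fun ω => (X ω, Y ω)) (x, y) = pmfOf p X x * pmfOf p Y y

/-- `X` and `Y` are conditionally independent given `Z`:
for every `z` with `P(z) > 0`, `P(x,y|z) = P(x|z)P(y|z)`, written multiplicatively. -/
def CondIndep {α β γ : Type} [DecidableEq α] [DecidableEq β] [DecidableEq γ]
    (p : Ω → ℝ) (X : Ω → α) (Y : Ω → β) (Z : Ω → γ) : Prop :=
  ∀ x y z, 0 < pmfOf p Z z →
    pmfOf p Z z * pmfOf p (fun ω => (X ω, Y ω, Z ω)) (x, y, z) =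
      pmfOf p (fun ω => (X ω, Z ω)) (x, z) * pmfOf p (fun ω => (Y ω, Z ω)) (y, z)

/-- The joint random variable formed by the features indexed by the finite set `S`. -/
def restrict {ι α : Type} (F : ι → Ω → α) (S : Finset ι) (ω : Ω) : {i // i ∈ S} → α :=
  fun i => F i.1 ω

end PaperFS

open PaperFS

set_option linter.unusedSectionVars false

namespace MBAux

variable {Ω : Type} [Fintype Ω]
variable {A B G : Type} [Fintype A] [Fintype B] [Fintype G]
  [DecidableEq A] [DecidableEq B] [DecidableEq G]

lemma pmfOf_nonneg {α : Type} [DecidableEq α] {p : Ω → ℝ} (hp : ∀ ω, 0 ≤ p ω)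
    (X : Ω → α) (x : α) : 0 ≤ pmfOf p X x :=
  Finset.sum_nonneg fun ω _ => hp ω

lemma pmfOf_le {α β : Type} [DecidableEq α] [DecidableEq β] {p : Ω → ℝ}
    (hp : ∀ ω, 0 ≤ p ω) (T : Ω → α) (t : α) (U : Ω → β) (u : β)
    (h : ∀ ω, T ω = t → U ω = u) : pmfOf p T t ≤ pmfOf p U u := by
  apply Finset.sum_le_sum_of_subset_of_nonneg
  · intro ω hω
    simp only [Finset.mem_filter, Finset.mem_univ, true_and] at *
    exact h ω hω
  · intro ω _ _; exact hp ω

lemma pmfOf_congr {α β : Type} [DecidableEq α] [DecidableEq β] (p : Ω → ℝ)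
    (T : Ω → α) (t : α) (U : Ω → β) (u : β)
    (h : ∀ ω, T ω = t ↔ U ω = u) : pmfOf p T t = pmfOf p U u := by
  unfold pmfOf
  congr 1
  exact Finset.filter_congr fun ω _ => h ω

variable (p : Ω → ℝ) (X : Ω → A) (Y : Ω → B) (Z : Ω → G)

lemma margY (x : A) (z : G) :
    pmfOf p (fun ω => (X ω, Z ω)) (x, z) =
      ∑ y : B, pmfOf p (fun ω => (X ω, Y ω, Z ω)) (x, y, z) := by
  unfold pmfOf
  simp only [Finset.sum_filter]
  rw [Finset.sum_comm]
  refine Finset.sum_congr rfl fun ω _ => ?_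
  by_cases h1 : X ω = x <;> by_cases h2 : Z ω = z <;>
    simp [Prod.ext_iff, h1, h2]

lemma margX (y : B) (z : G) :
    pmfOf p (fun ω => (Y ω, Z ω)) (y, z) =
      ∑ x : A, pmfOf p (fun ω => (X ω, Y ω, Z ω)) (x, y, z) := by
  unfold pmfOf
  simp only [Finset.sum_filter]
  rw [Finset.sum_comm]
  refine Finset.sum_congr rfl fun ω _ => ?_
  by_cases h1 : Y ω = y <;> by_cases h2 : Z ω = z <;>
    simp [Prod.ext_iff, h1, h2]

lemma margPair (z : G) :
    pmfOf p Z z = ∑ x : A, pmfOf p (fun ω => (X ω, Z ω)) (x, z) := by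
  unfold pmfOf
  simp only [Finset.sum_filter]
  rw [Finset.sum_comm]
  refine Finset.sum_congr rfl fun ω _ => ?_
  by_cases h2 : Z ω = z <;> simp [Prod.ext_iff, h2]

lemma margXY (z : G) :
    pmfOf p Z z = ∑ x : A, ∑ y : B, pmfOf p (fun ω => (X ω, Y ω, Z ω)) (x, y, z) := by
  rw [margPair p X Z z]
  exact Finset.sum_congr rfl fun x _ => margY p X Y Z x z

/-- termwise identity for the chain rule -/
lemma chain_term (hp : ∀ ω, 0 ≤ p ω) (x : A) (y : B) (z : G) :
    pmfOf p (fun ω => (X ω, Y ω, Z ω)) (x, y, z) *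
      Real.log (pmfOf p (fun ω => (X ω, Y ω, Z ω)) (x, y, z) /
        (pmfOf p X x * pmfOf p (fun ω => (Y ω, Z ω)) (y, z))) =
    pmfOf p (fun ω => (X ω, Y ω, Z ω)) (x, y, z) *
      Real.log (pmfOf p (fun ω => (X ω, Z ω)) (x, z) / (pmfOf p X x * pmfOf p Z z)) +
    pmfOf p (fun ω => (X ω, Y ω, Z ω)) (x, y, z) *
      Real.log ((pmfOf p Z z * pmfOf p (fun ω => (X ω, Y ω, Z ω)) (x, y, z)) /
        (pmfOf p (fun ω => (X ω, Z ω)) (x, z) * pmfOf p (fun ω => (Y ω, Z ω)) (y, z))) := by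
  set q := pmfOf p (fun ω => (X ω, Y ω, Z ω)) (x, y, z) with hq
  rcases eq_or_lt_of_le (pmfOf_nonneg hp (fun ω => (X ω, Y ω, Z ω)) (x, y, z)) with h0 | h0
  · rw [← hq] at h0; rw [← h0]; ring
  · rw [← hq] at h0
    have ha : 0 < pmfOf p X x :=
      lt_of_lt_of_le h0 (pmfOf_le hp _ _ X x (fun ω h => by
        simpa using congrArg Prod.fst h))
    have hc : 0 < pmfOf p Z z :=
      lt_of_lt_of_le h0 (pmfOf_le hp _ _ Z z (fun ω h => by
        simp [Prod.ext_iff] at h; exact h.2.2))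
    have hxz : 0 < pmfOf p (fun ω => (X ω, Z ω)) (x, z) :=
      lt_of_lt_of_le h0 (pmfOf_le hp _ _ _ (x, z) (fun ω h => by
        simp [Prod.ext_iff] at h ⊢; exact ⟨h.1, h.2.2⟩))
    have hyz : 0 < pmfOf p (fun ω => (Y ω, Z ω)) (y, z) :=
      lt_of_lt_of_le h0 (pmfOf_le hp _ _ _ (y, z) (fun ω h => by
        simp [Prod.ext_iff] at h ⊢; exact ⟨h.2.1, h.2.2⟩))
    rw [← mul_add]
    congr 1
    rw [← Real.log_mul (by positivity) (by positivity)]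
    congr 1
    field_simp

lemma chain_rule (hp : ∀ ω, 0 ≤ p ω) :
    MI p X (fun ω => (Y ω, Z ω)) = MI p X Z + CMI p X Y Z := by
  unfold MI CMI
  have hswap : (∑ z : G, ∑ x : A, ∑ y : B,
      pmfOf p (fun ω => (X ω, Y ω, Z ω)) (x, y, z) *
        Real.log ((pmfOf p Z z * pmfOf p (fun ω => (X ω, Y ω, Z ω)) (x, y, z)) /
          (pmfOf p (fun ω => (X ω, Z ω)) (x, z) * pmfOf p (fun ω => (Y ω, Z ω)) (y, z))))
      = ∑ x : A, ∑ y : B, ∑ z : G,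
      pmfOf p (fun ω => (X ω, Y ω, Z ω)) (x, y, z) *
        Real.log ((pmfOf p Z z * pmfOf p (fun ω => (X ω, Y ω, Z ω)) (x, y, z)) /
          (pmfOf p (fun ω => (X ω, Z ω)) (x, z) * pmfOf p (fun ω => (Y ω, Z ω)) (y, z))) := by
    rw [Finset.sum_comm]
    exact Finset.sum_congr rfl fun x _ => Finset.sum_comm
  rw [hswap]
  have hMIZ : (∑ x : A, ∑ z : G,
      pmfOf p (fun ω => (X ω, Z ω)) (x, z) *
        Real.log (pmfOf p (fun ω => (X ω, Z ω)) (x, z) / (pmfOf p X x * pmfOf p Z z)))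
      = ∑ x : A, ∑ y : B, ∑ z : G,
      pmfOf p (fun ω => (X ω, Y ω, Z ω)) (x, y, z) *
        Real.log (pmfOf p (fun ω => (X ω, Z ω)) (x, z) / (pmfOf p X x * pmfOf p Z z)) := by
    refine Finset.sum_congr rfl fun x _ => ?_
    rw [Finset.sum_comm]
    refine Finset.sum_congr rfl fun z _ => ?_
    rw [margY p X Y Z x z, Finset.sum_mul]
  rw [hMIZ, ← Finset.sum_add_distrib]
  refine Finset.sum_congr rfl fun x _ => ?_
  rw [← Finset.sum_add_distrib]
  rw [Fintype.sum_prod_type]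
  refine Finset.sum_congr rfl fun y _ => ?_
  rw [← Finset.sum_add_distrib]
  exact Finset.sum_congr rfl fun z _ => chain_term p X Y Z hp x y z

lemma CMI_nonneg (hp : ∀ ω, 0 ≤ p ω) : 0 ≤ CMI p X Y Z := by
  unfold CMI
  refine Finset.sum_nonneg fun z _ => ?_
  set c := pmfOf p Z z with hc
  rcases eq_or_lt_of_le (pmfOf_nonneg hp Z z) with h0 | h0
  · -- c = 0 : all joints are 0
    have : ∀ x y, pmfOf p (fun ω => (X ω, Y ω, Z ω)) (x, y, z) = 0 := by
      intro x y
      have hle := pmfOf_le hp (fun ω => (X ω, Y ω, Z ω)) (x, y, z) Z z (fun ω h => by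
        simp [Prod.ext_iff] at h; exact h.2.2)
      have hge := pmfOf_nonneg hp (fun ω => (X ω, Y ω, Z ω)) (x, y, z)
      linarith [h0.symm ▸ hle]
    refine le_of_eq ?_
    symm
    refine Finset.sum_eq_zero fun x _ => Finset.sum_eq_zero fun y _ => ?_
    rw [this x y]; ring
  · rw [← hc] at h0
    -- pointwise: term ≥ q - xz*yz/c
    have hpt : ∀ x y,
        pmfOf p (fun ω => (X ω, Y ω, Z ω)) (x, y, z) -
          pmfOf p (fun ω => (X ω, Z ω)) (x, z) * pmfOf p (fun ω => (Y ω, Z ω)) (y, z) / c ≤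
        pmfOf p (fun ω => (X ω, Y ω, Z ω)) (x, y, z) *
          Real.log ((c * pmfOf p (fun ω => (X ω, Y ω, Z ω)) (x, y, z)) /
            (pmfOf p (fun ω => (X ω, Z ω)) (x, z) * pmfOf p (fun ω => (Y ω, Z ω)) (y, z))) := by
      intro x y
      set q := pmfOf p (fun ω => (X ω, Y ω, Z ω)) (x, y, z) with hqd
      set u := pmfOf p (fun ω => (X ω, Z ω)) (x, z) with hud
      set v := pmfOf p (fun ω => (Y ω, Z ω)) (y, z) with hvd
      rcases eq_or_lt_of_le (pmfOf_nonneg hp (fun ω => (X ω, Y ω, Z ω)) (x, y, z)) with hq0 | hq0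
      · rw [← hqd] at hq0
        rw [← hq0]
        have hu : 0 ≤ u := pmfOf_nonneg hp _ _
        have hv : 0 ≤ v := pmfOf_nonneg hp _ _
        have : 0 ≤ u * v / c := by positivity
        simp
        linarith
      · rw [← hqd] at hq0
        have hu : 0 < u :=
          lt_of_lt_of_le hq0 (pmfOf_le hp _ _ _ (x, z) (fun ω h => by
            simp [Prod.ext_iff] at h ⊢; exact ⟨h.1, h.2.2⟩))
        have hv : 0 < v :=
          lt_of_lt_of_le hq0 (pmfOf_le hp _ _ _ (y, z) (fun ω h => by
            simp [Prod.ext_iff] at h ⊢; exact ⟨h.2.1, h.2.2⟩))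
        have hlog : Real.log ((u * v) / (c * q)) ≤ (u * v) / (c * q) - 1 :=
          Real.log_le_sub_one_of_pos (by positivity)
        have hrw : Real.log ((c * q) / (u * v)) = -Real.log ((u * v) / (c * q)) := by
          rw [← Real.log_inv]
          congr 1
          field_simp
        rw [hrw]
        have h2 : q * -Real.log ((u * v) / (c * q)) ≥ q * -((u * v) / (c * q) - 1) := by
          apply mul_le_mul_of_nonneg_left (neg_le_neg hlog) (le_of_lt hq0)
        refine le_trans ?_ h2
        have : q * -((u * v) / (c * q) - 1) = q - u * v / c := by
          field_simp
          ring
        rw [this]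
    calc (0:ℝ) = (∑ x : A, ∑ y : B, pmfOf p (fun ω => (X ω, Y ω, Z ω)) (x, y, z))
          - (∑ x : A, pmfOf p (fun ω => (X ω, Z ω)) (x, z)) *
            (∑ y : B, pmfOf p (fun ω => (Y ω, Z ω)) (y, z)) / c := by
          rw [← margXY p X Y Z z]
          have h1 : (∑ x : A, pmfOf p (fun ω => (X ω, Z ω)) (x, z)) = c := by
            rw [hc, margXY p X Y Z z]
            exact Finset.sum_congr rfl fun x _ => margY p X Y Z x z
          have h2 : (∑ y : B, pmfOf p (fun ω => (Y ω, Z ω)) (y, z)) = c := by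
            rw [hc, margXY p X Y Z z, Finset.sum_comm]
            exact Finset.sum_congr rfl fun y _ => margX p X Y Z y z
          rw [h1, h2]
          field_simp
          rw [hc, sub_self]
      _ = ∑ x : A, ∑ y : B, (pmfOf p (fun ω => (X ω, Y ω, Z ω)) (x, y, z)
            - pmfOf p (fun ω => (X ω, Z ω)) (x, z) * pmfOf p (fun ω => (Y ω, Z ω)) (y, z) / c) := by
          rw [Finset.sum_mul_sum, Finset.sum_div, ← Finset.sum_sub_distrib]
          refine Finset.sum_congr rfl fun x _ => ?_
          rw [Finset.sum_div, ← Finset.sum_sub_distrib]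
      _ ≤ _ := by
          refine Finset.sum_le_sum fun x _ => Finset.sum_le_sum fun y _ => hpt x y

lemma CMI_eq_zero_of_condIndep (hp : ∀ ω, 0 ≤ p ω) (h : CondIndep p X Y Z) :
    CMI p X Y Z = 0 := by
  unfold CMI
  refine Finset.sum_eq_zero fun z _ => Finset.sum_eq_zero fun x _ => Finset.sum_eq_zero fun y _ => ?_
  rcases eq_or_lt_of_le (pmfOf_nonneg hp Z z) with h0 | h0
  · have hq0 : pmfOf p (fun ω => (X ω, Y ω, Z ω)) (x, y, z) = 0 := by
      have hle := pmfOf_le hp (fun ω => (X ω, Y ω, Z ω)) (x, y, z) Z z (fun ω hh => by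
        simp [Prod.ext_iff] at hh; exact hh.2.2)
      have hge := pmfOf_nonneg hp (fun ω => (X ω, Y ω, Z ω)) (x, y, z)
      linarith [h0.symm ▸ hle]
    rw [hq0]; ring
  · have hci := h x y z h0
    rcases eq_or_lt_of_le (pmfOf_nonneg hp (fun ω => (X ω, Y ω, Z ω)) (x, y, z)) with hq0 | hq0
    · rw [← hq0]; ring
    · rw [← hci]
      rw [div_self (by positivity), Real.log_one, mul_zero]

lemma MI_pair_comm :
    MI p X (fun ω => (Y ω, Z ω)) = MI p X (fun ω => (Z ω, Y ω)) := by
  unfold MI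
  refine Finset.sum_congr rfl fun x _ => ?_
  rw [Fintype.sum_prod_type, Fintype.sum_prod_type, Finset.sum_comm]
  refine Finset.sum_congr rfl fun z _ => Finset.sum_congr rfl fun y _ => ?_
  have e1 : pmfOf p (fun ω => (X ω, Y ω, Z ω)) (x, y, z)
      = pmfOf p (fun ω => (X ω, Z ω, Y ω)) (x, z, y) :=
    pmfOf_congr p _ _ _ _ (fun ω => by simp [Prod.ext_iff]; tauto)
  have e2 : pmfOf p (fun ω => (Y ω, Z ω)) (y, z)
      = pmfOf p (fun ω => (Z ω, Y ω)) (z, y) :=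
    pmfOf_congr p _ _ _ _ (fun ω => by simp [Prod.ext_iff]; tauto)
  rw [e1, e2]

end MBAux

/-- a Markov blanket `M` dominates every disjoint feature subset `S`:
`I(C;M) ≥ I(C;S)`, strictly unless `I(C;M|S) = 0`. -/
theorem mb_dominates_disjoint_subsets
    {Ω ι α γ : Type} [Fintype Ω] [Fintype ι] [DecidableEq ι]
    [Fintype α] [DecidableEq α] [Fintype γ] [DecidableEq γ]
    (p : Ω → ℝ) (hp : IsPMF p) (C : Ω → γ) (F : ι → Ω → α) (M : Finset ι)
    (hMB : ∀ S : Finset ι, S ⊆ Mᶜ → CondIndep p C (restrict F S) (restrict F M)) :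
    ∀ S : Finset ι, S ⊆ Mᶜ →
      MI p C (restrict F S) ≤ MI p C (restrict F M) ∧
      (CMI p C (restrict F M) (restrict F S) ≠ 0 →
        MI p C (restrict F S) < MI p C (restrict F M)) := by
  intro S hS
  have hp0 := hp.1
  have h0 : CMI p C (restrict F S) (restrict F M) = 0 :=
    MBAux.CMI_eq_zero_of_condIndep p C (restrict F S) (restrict F M) hp0 (hMB S hS)
  have h1 := MBAux.chain_rule p C (restrict F S) (restrict F M) hp0
  have h2 := MBAux.chain_rule p C (restrict F M) (restrict F S) hp0
  have h3 := MBAux.MI_pair_comm p C (restrict F M) (restrict F S)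
  have hnn := MBAux.CMI_nonneg p C (restrict F M) (restrict F S) hp0
  have key : MI p C (restrict F M) =
      MI p C (restrict F S) + CMI p C (restrict F M) (restrict F S) := by
    rw [h0, add_zero] at h1
    rw [← h1, ← h3, h2]
  constructor
  · linarith
  · intro hne
    have : 0 < CMI p C (restrict F M) (restrict F S) := lt_of_le_of_ne hnn (Ne.symm hne)
    linarith
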